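/- Let H, H', K, K' be finite-dimensional complex inner product spaces, d : H → K and d' : H' → K' linear maps, and suppose there exist linear isometries J⁰ : H' → H (‖J⁰x‖ = ‖x‖ for all x) and J¹ : K' → K (‖J¹y‖ = ‖y‖ for all y) with d ∘ J⁰ = J¹ ∘ d'. Let λ_1 ≤ … ≤ λ_n and λ'_1 ≤ … ≤ λ'_{n'} be the eigenvalues of d*d and d'*d' in nondecreasing order with multiplicity, and set r = n − n' ≥ 0. Then λ_k ≤ λ'_k for all 1 ≤ k ≤ n', and λ'_k ≤ λ_{k+r} for all 1 ≤ k ≤ n'. -/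

import Mathlib

/-- The eigenvalues (with algebraic multiplicity) of an endomorphism of a
finite-dimensional complex vector space whose spectrum is real, listed in
nondecreasing order: the real parts of the roots of the characteristic
polynomial, sorted; `opEig T k` is the `(k+1)`-st smallest (0-based index). -/
noncomputable def opEig {H : Type} [NormedAddCommGroup H] [InnerProductSpace ℂ H]
    [FiniteDimensional ℂ H] (T : H →ₗ[ℂ] H) (k : ℕ) : ℝ :=
  (((LinearMap.charpoly T).roots.map Complex.re).sort (· ≤ ·)).getD k 0

open Module LinearMap Polynomial in
lemma opEig_eq {H : Type} [NormedAddCommGroup H] [InnerProductSpace ℂ H]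
    [FiniteDimensional ℂ H] {n : ℕ} (b : Basis (Fin n) ℂ H) (A : H →ₗ[ℂ] H)
    (g : Fin n → ℝ) (hg : Monotone g) (hA : ∀ i, A (b i) = (g i : ℂ) • b i)
    (k : ℕ) (hk : k < n) : opEig A k = g ⟨k, hk⟩ := by
  have hmat : LinearMap.toMatrix b b A = Matrix.diagonal (fun i => (g i : ℂ)) := by
    ext i j
    rw [LinearMap.toMatrix_apply, hA, map_smul, Basis.repr_self]
    by_cases h : i = j
    · subst h; simp
    · simp [Matrix.diagonal, h, Finsupp.single_apply, Ne.symm h]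
  have hcp : A.charpoly = ((Finset.univ.val.map fun i => (g i : ℂ)).map
      fun a => X - C a).prod := by
    have hcd : Matrix.charmatrix (Matrix.diagonal fun i => (g i : ℂ))
        = Matrix.diagonal (fun i => (X : ℂ[X]) - C (g i : ℂ)) := by
      ext i j
      by_cases h : i = j
      · subst h; simp [Matrix.charmatrix_apply_eq]
      · simp [Matrix.charmatrix_apply_ne _ _ _ h, Matrix.diagonal_apply_ne _ h]
    rw [← A.charpoly_toMatrix b, hmat, Matrix.charpoly, hcd, Matrix.det_diagonal]
    rw [Multiset.map_map, Finset.prod_eq_multiset_prod]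
    rfl
  have hroots : A.charpoly.roots = Finset.univ.val.map fun i => (g i : ℂ) := by
    rw [hcp, roots_multiset_prod_X_sub_C]
  have hre : A.charpoly.roots.map Complex.re = Finset.univ.val.map g := by
    rw [hroots, Multiset.map_map]; simp
  have huniv : (Finset.univ.val.map g : Multiset ℝ) = (List.ofFn g : List ℝ) := by
    rw [List.ofFn_eq_map, Fin.univ_def]
    rfl
  have hsort : ((Finset.univ.val.map g).sort (· ≤ ·)) = List.ofFn g := by
    have hperm : List.Perm ((Finset.univ.val.map g).sort (· ≤ ·)) (List.ofFn g) := by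
      rw [← Multiset.coe_eq_coe, Multiset.sort_eq, huniv]
    exact List.Perm.eq_of_pairwise' (Multiset.pairwise_sort _ _)
      (List.sortedLE_ofFn_iff.2 hg).pairwise hperm
  rw [opEig, hre, hsort, List.getD_eq_getElem?_getD]
  simp [List.getElem?_ofFn, hk]

open Module in
lemma inner_A {H : Type} [NormedAddCommGroup H] [InnerProductSpace ℂ H] {n : ℕ}
    (b : OrthonormalBasis (Fin n) ℂ H) (A : H →ₗ[ℂ] H) (g : Fin n → ℝ)
    (hA : ∀ i, A (b i) = (g i : ℂ) • b i) (x : H) :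
    (inner ℂ x (A x) : ℂ) = ((∑ i, g i * ‖b.repr x i‖^2 : ℝ) : ℂ) := by
  nth_rewrite 2 [← b.sum_repr x]
  rw [map_sum, inner_sum]
  push_cast
  congr 1
  ext j
  rw [map_smul, hA, inner_smul_right, inner_smul_right, ← inner_conj_symm,
    ← OrthonormalBasis.repr_apply_apply]
  set c := b.repr x j
  rw [show c * ((g j : ℂ) * (starRingEnd ℂ) c) = (g j : ℂ) * (c * (starRingEnd ℂ) c) by ring,
    Complex.mul_conj]
  norm_cast
  rw [Complex.sq_norm]

open Module in
lemma norm_sq_sum {H : Type} [NormedAddCommGroup H] [InnerProductSpace ℂ H] {n : ℕ}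
    (b : OrthonormalBasis (Fin n) ℂ H) (x : H) :
    ‖x‖^2 = ∑ i, ‖b.repr x i‖^2 := by
  have := inner_A b LinearMap.id (fun _ => 1) (by simp) x
  simp only [LinearMap.id_apply, one_mul] at this
  rw [← @inner_self_eq_norm_sq ℂ]
  have h2 := congrArg Complex.re this
  rw [Complex.ofReal_re] at h2
  exact h2 ▸ by norm_cast

open Module in
lemma repr_eq_zero_of_mem_span {H : Type} [NormedAddCommGroup H] [InnerProductSpace ℂ H]
    {n : ℕ} (b : OrthonormalBasis (Fin n) ℂ H) (s : Finset (Fin n)) {x : H}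
    (hx : x ∈ Submodule.span ℂ (b '' (s : Set (Fin n)))) {j : Fin n} (hj : j ∉ s) :
    b.repr x j = 0 := by
  induction hx using Submodule.span_induction with
  | mem y hy =>
    obtain ⟨i, hi, rfl⟩ := hy
    rw [OrthonormalBasis.repr_self]
    rw [EuclideanSpace.single_apply]
    simp [show j ≠ i from fun h => hj (h ▸ hi)]
  | zero => simp
  | add y z _ _ hy hz => rw [map_add]; simp [hy, hz]
  | smul c y _ hy => rw [map_smul]; simp [hy]

open Module in
lemma finrank_span_image {H : Type} [NormedAddCommGroup H] [InnerProductSpace ℂ H]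
    [FiniteDimensional ℂ H] {n : ℕ} (b : OrthonormalBasis (Fin n) ℂ H)
    (s : Finset (Fin n)) :
    finrank ℂ (Submodule.span ℂ (b '' (s : Set (Fin n)))) = s.card := by
  rw [Set.image_eq_range]
  have hli : LinearIndependent ℂ (fun i : (s : Set (Fin n)) => b i) :=
    (b.orthonormal.linearIndependent).comp _ Subtype.val_injective
  rw [finrank_span_eq_card hli]
  simp

open Module in
lemma aux_exists_ne_zero_inf {V : Type} [NormedAddCommGroup V] [InnerProductSpace ℂ V]
    [FiniteDimensional ℂ V] (U W : Submodule ℂ V)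
    (h : finrank ℂ V < finrank ℂ U + finrank ℂ W) : ∃ x : V, x ∈ U ⊓ W ∧ x ≠ 0 := by
  have hsum := Submodule.finrank_sup_add_finrank_inf_eq U W
  have hsup : finrank ℂ ↥(U ⊔ W) ≤ finrank ℂ V := Submodule.finrank_le _
  have hpos : 0 < finrank ℂ ↥(U ⊓ W) := by omega
  have : Nontrivial ↥(U ⊓ W) := finrank_pos_iff.mp hpos
  obtain ⟨y, hy⟩ := exists_ne (0 : ↥(U ⊓ W))
  exact ⟨y.val, y.2, fun h0 => hy (Subtype.ext h0)⟩

open Module in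
lemma aux_pkg {H K : Type} [NormedAddCommGroup H] [InnerProductSpace ℂ H]
    [FiniteDimensional ℂ H] [NormedAddCommGroup K] [InnerProductSpace ℂ K]
    [FiniteDimensional ℂ K] (d : H →ₗ[ℂ] K) :
    ∃ (b : OrthonormalBasis (Fin (finrank ℂ H)) ℂ H) (g : Fin (finrank ℂ H) → ℝ),
      Monotone g ∧
      (∀ i, (LinearMap.adjoint d ∘ₗ d) (b i) = (g i : ℂ) • b i) := by
  have hsym : (LinearMap.adjoint d ∘ₗ d).IsSymmetric := by
    intro x y
    simp [LinearMap.adjoint_inner_left, LinearMap.adjoint_inner_right]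
  set n := finrank ℂ H
  have hn : finrank ℂ H = n := rfl
  let b0 := hsym.eigenvectorBasis hn
  let g0 := hsym.eigenvalues hn
  let σ := Tuple.sort g0
  refine ⟨b0.reindex σ.symm, g0 ∘ σ, Tuple.monotone_sort g0, fun i => ?_⟩
  have : b0.reindex σ.symm i = b0 (σ i) := by
    simp [OrthonormalBasis.reindex_apply]
  rw [this, hsym.apply_eigenvectorBasis]
  rfl

open Module in
lemma norm_d_sq {H K : Type} [NormedAddCommGroup H] [InnerProductSpace ℂ H]
    [FiniteDimensional ℂ H] [NormedAddCommGroup K] [InnerProductSpace ℂ K]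
    [FiniteDimensional ℂ K] (d : H →ₗ[ℂ] K) {n : ℕ}
    (b : OrthonormalBasis (Fin n) ℂ H) (g : Fin n → ℝ)
    (hA : ∀ i, (LinearMap.adjoint d ∘ₗ d) (b i) = (g i : ℂ) • b i) (x : H) :
    ‖d x‖^2 = ∑ i, g i * ‖b.repr x i‖^2 := by
  have h1 := inner_A b (LinearMap.adjoint d ∘ₗ d) g hA x
  have h2 : (inner ℂ x ((LinearMap.adjoint d ∘ₗ d) x) : ℂ) = inner ℂ (d x) (d x) := by
    rw [LinearMap.comp_apply, LinearMap.adjoint_inner_right]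
  rw [h2, @inner_self_eq_norm_sq_to_K ℂ] at h1
  have h3 := congrArg Complex.re h1
  norm_cast at h3

open Module in
lemma bound_upper {H K : Type} [NormedAddCommGroup H] [InnerProductSpace ℂ H]
    [FiniteDimensional ℂ H] [NormedAddCommGroup K] [InnerProductSpace ℂ K]
    [FiniteDimensional ℂ K] (d : H →ₗ[ℂ] K) {n : ℕ}
    (b : OrthonormalBasis (Fin n) ℂ H) (g : Fin n → ℝ)
    (hA : ∀ i, (LinearMap.adjoint d ∘ₗ d) (b i) = (g i : ℂ) • b i)
    (s : Finset (Fin n)) (B : ℝ) (hB : ∀ i ∈ s, g i ≤ B) {x : H}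
    (hx : x ∈ Submodule.span ℂ (b '' (s : Set (Fin n)))) :
    ‖d x‖^2 ≤ B * ‖x‖^2 := by
  rw [norm_d_sq d b g hA x, norm_sq_sum b x, Finset.mul_sum]
  apply Finset.sum_le_sum
  intro i _
  by_cases h : i ∈ s
  · exact mul_le_mul_of_nonneg_right (hB i h) (sq_nonneg _)
  · rw [repr_eq_zero_of_mem_span b s hx h]
    simp

open Module in
lemma bound_lower {H K : Type} [NormedAddCommGroup H] [InnerProductSpace ℂ H]
    [FiniteDimensional ℂ H] [NormedAddCommGroup K] [InnerProductSpace ℂ K]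
    [FiniteDimensional ℂ K] (d : H →ₗ[ℂ] K) {n : ℕ}
    (b : OrthonormalBasis (Fin n) ℂ H) (g : Fin n → ℝ)
    (hA : ∀ i, (LinearMap.adjoint d ∘ₗ d) (b i) = (g i : ℂ) • b i)
    (s : Finset (Fin n)) (B : ℝ) (hB : ∀ i ∈ s, B ≤ g i) {x : H}
    (hx : x ∈ Submodule.span ℂ (b '' (s : Set (Fin n)))) :
    B * ‖x‖^2 ≤ ‖d x‖^2 := by
  rw [norm_d_sq d b g hA x, norm_sq_sum b x, Finset.mul_sum]
  apply Finset.sum_le_sum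
  intro i _
  by_cases h : i ∈ s
  · exact mul_le_mul_of_nonneg_right (hB i h) (sq_nonneg _)
  · rw [repr_eq_zero_of_mem_span b s hx h]
    simp

/-- if `d ∘ J⁰ = J¹ ∘ d'` with `J⁰, J¹` linear isometries, and
`r = dim H − dim H' ≥ 0`, then the ordered eigenvalues of `d*d` and `d'*d'`
satisfy `λ_k ≤ λ'_k` and `λ'_k ≤ λ_{k+r}` for all `1 ≤ k ≤ dim H'`. -/
theorem stmt6 {H K H' K' : Type}
    [NormedAddCommGroup H] [InnerProductSpace ℂ H] [FiniteDimensional ℂ H]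
    [NormedAddCommGroup K] [InnerProductSpace ℂ K] [FiniteDimensional ℂ K]
    [NormedAddCommGroup H'] [InnerProductSpace ℂ H'] [FiniteDimensional ℂ H']
    [NormedAddCommGroup K'] [InnerProductSpace ℂ K'] [FiniteDimensional ℂ K']
    (d : H →ₗ[ℂ] K) (d' : H' →ₗ[ℂ] K')
    (J0 : H' →ₗ[ℂ] H) (J1 : K' →ₗ[ℂ] K)
    (hJ0 : ∀ x : H', ‖J0 x‖ = ‖x‖)
    (hJ1 : ∀ y : K', ‖J1 y‖ = ‖y‖)
    (hcomm : d ∘ₗ J0 = J1 ∘ₗ d') :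
    Module.finrank ℂ H' ≤ Module.finrank ℂ H ∧
      (∀ k : ℕ, 1 ≤ k → k ≤ Module.finrank ℂ H' →
        opEig (LinearMap.adjoint d ∘ₗ d) (k - 1)
          ≤ opEig (LinearMap.adjoint d' ∘ₗ d') (k - 1)) ∧
      (∀ k : ℕ, 1 ≤ k → k ≤ Module.finrank ℂ H' →
        opEig (LinearMap.adjoint d' ∘ₗ d') (k - 1)
          ≤ opEig (LinearMap.adjoint d ∘ₗ d)
              (k - 1 + (Module.finrank ℂ H - Module.finrank ℂ H'))) := by
  classical
  obtain ⟨b, g, hg, hA⟩ := aux_pkg d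
  obtain ⟨b', g', hg', hA'⟩ := aux_pkg d'
  have hinj : Function.Injective J0 := by
    intro x y hxy
    have h0 : ‖J0 (x - y)‖ = ‖x - y‖ := hJ0 _
    rw [map_sub, hxy, sub_self, norm_zero] at h0
    exact sub_eq_zero.mp (norm_eq_zero.mp h0.symm)
  have hQ : ∀ x : H', ‖d (J0 x)‖ = ‖d' x‖ := by
    intro x
    have hcx : d (J0 x) = J1 (d' x) := by
      have := LinearMap.ext_iff.mp hcomm x
      simpa using this
    rw [hcx, hJ1]
  have hle : Module.finrank ℂ H' ≤ Module.finrank ℂ H := by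
    rw [← LinearMap.finrank_range_of_inj hinj]
    exact Submodule.finrank_le _
  refine ⟨hle, ?_, ?_⟩
  · -- λ_k ≤ λ'_k
    intro k hk1 hk2
    have hm' : k - 1 < Module.finrank ℂ H' := by omega
    have hm : k - 1 < Module.finrank ℂ H := lt_of_lt_of_le hm' hle
    rw [opEig_eq b.toBasis _ g hg (by simpa using hA) (k - 1) hm,
        opEig_eq b'.toBasis _ g' hg' (by simpa using hA') (k - 1) hm']
    set jm : Fin (Module.finrank ℂ H) := ⟨k - 1, hm⟩
    set jm' : Fin (Module.finrank ℂ H') := ⟨k - 1, hm'⟩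
    set U := Submodule.map J0 (Submodule.span ℂ (b' '' ((Finset.Iic jm' : Finset _) : Set _)))
    set W := Submodule.span ℂ (b '' ((Finset.Ici jm : Finset _) : Set _))
    have hU : Module.finrank ℂ U = k := by
      rw [← LinearEquiv.finrank_eq (Submodule.equivMapOfInjective J0 hinj _),
        finrank_span_image, Fin.card_Iic]
      simp [jm']
      omega
    have hW : Module.finrank ℂ W = Module.finrank ℂ H - (k - 1) := by
      rw [finrank_span_image, Fin.card_Ici]
    obtain ⟨x, hxmem, hx0⟩ := aux_exists_ne_zero_inf U W (by rw [hU, hW]; omega)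
    obtain ⟨y, hy, rfl⟩ := hxmem.1
    have hy0 : y ≠ 0 := fun h => hx0 (by rw [h, map_zero])
    have h1 : ‖d' y‖^2 ≤ g' jm' * ‖y‖^2 :=
      bound_upper d' b' g' hA' _ _ (fun i hi => hg' (Finset.mem_Iic.mp hi)) hy
    have h2 : g jm * ‖J0 y‖^2 ≤ ‖d (J0 y)‖^2 :=
      bound_lower d b g hA _ _ (fun i hi => hg (Finset.mem_Ici.mp hi)) hxmem.2
    rw [hQ y, hJ0 y] at h2
    have hypos : 0 < ‖y‖^2 := pow_pos (norm_pos_iff.mpr hy0) 2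
    nlinarith [h1, h2]
  · -- λ'_k ≤ λ_{k+r}
    intro k hk1 hk2
    have hm' : k - 1 < Module.finrank ℂ H' := by omega
    have hmr : k - 1 + (Module.finrank ℂ H - Module.finrank ℂ H') < Module.finrank ℂ H := by
      omega
    rw [opEig_eq b.toBasis _ g hg (by simpa using hA) _ hmr,
        opEig_eq b'.toBasis _ g' hg' (by simpa using hA') (k - 1) hm']
    set jr : Fin (Module.finrank ℂ H) :=
      ⟨k - 1 + (Module.finrank ℂ H - Module.finrank ℂ H'), hmr⟩
    set jm' : Fin (Module.finrank ℂ H') := ⟨k - 1, hm'⟩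
    set Wlow := Submodule.span ℂ (b '' ((Finset.Iic jr : Finset _) : Set _))
    set U := Submodule.comap J0 Wlow
    set W := Submodule.span ℂ (b' '' ((Finset.Ici jm' : Finset _) : Set _))
    have hWlow : Module.finrank ℂ Wlow
        = k + (Module.finrank ℂ H - Module.finrank ℂ H') := by
      rw [finrank_span_image, Fin.card_Iic]
      simp [jr]
      omega
    have hU : k ≤ Module.finrank ℂ U := by
      have hmc : Submodule.map J0 U = Wlow ⊓ LinearMap.range J0 :=
        (Submodule.map_comap_eq J0 Wlow).trans (inf_comm _ _)
      have he : Module.finrank ℂ U = Module.finrank ℂ ↥(Wlow ⊓ LinearMap.range J0) := by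
        rw [← hmc]
        exact LinearEquiv.finrank_eq (Submodule.equivMapOfInjective J0 hinj _)
      have hsum := Submodule.finrank_sup_add_finrank_inf_eq Wlow (LinearMap.range J0)
      have hsup : Module.finrank ℂ ↥(Wlow ⊔ LinearMap.range J0) ≤ Module.finrank ℂ H :=
        Submodule.finrank_le _
      have hrg : Module.finrank ℂ (LinearMap.range J0) = Module.finrank ℂ H' :=
        LinearMap.finrank_range_of_inj hinj
      omega
    have hW : Module.finrank ℂ W = Module.finrank ℂ H' - (k - 1) := by
      rw [finrank_span_image, Fin.card_Ici]
    obtain ⟨x, hxmem, hx0⟩ := aux_exists_ne_zero_inf U W (by omega)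
    have h1 : g' jm' * ‖x‖^2 ≤ ‖d' x‖^2 :=
      bound_lower d' b' g' hA' _ _ (fun i hi => hg' (Finset.mem_Ici.mp hi)) hxmem.2
    have h2 : ‖d (J0 x)‖^2 ≤ g jr * ‖J0 x‖^2 :=
      bound_upper d b g hA _ _ (fun i hi => hg (Finset.mem_Iic.mp hi)) hxmem.1
    rw [hQ x, hJ0 x] at h2
    have hxpos : 0 < ‖x‖^2 := pow_pos (norm_pos_iff.mpr hx0) 2
    nlinarith [h1, h2]
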